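/- Let N(g) denote the number of zeros of a nonzero polynomial g ∈ ℂ[z] counted with multiplicity and N¹(g) the number of distinct zeros. Let G be a homogeneous polynomial in n+1 variables and f₀,…,fₙ ∈ ℂ[z] polynomials with no common zeros such that G(f₀,…,fₙ) ≠ 0. Then N(G(f)) − N¹(G(f)) ≤ Σᵢ₌₀ⁿ ( N(Gᵢ) − N¹(Gᵢ) ), where Gᵢ is the numerator of the rational function G(f₀/fᵢ,…,fₙ/fᵢ) in lowest terms (i.e., the count where for each zero z₀ of G(f) one uses an index i with fᵢ(z₀) ≠ 0). -/

import Mathlib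

/-- Number of zeros of a polynomial counted with multiplicity. -/
noncomputable def Nfull (g : Polynomial ℂ) : ℕ := Multiset.card g.roots

/-- Number of distinct zeros of a polynomial (counted without multiplicity). -/
noncomputable def Ndist (g : Polynomial ℂ) : ℕ := g.roots.toFinset.card

open Polynomial

lemma aeval_homog_smul {S : Type*} [CommRing S] [Algebra ℂ S] {m d : ℕ}
    {G : MvPolynomial (Fin m) ℂ} (hG : G.IsHomogeneous d) (c : S) (x : Fin m → S) :
    MvPolynomial.aeval (fun j => c * x j) G = c ^ d * MvPolynomial.aeval x G := by
  rw [MvPolynomial.aeval_def, MvPolynomial.aeval_def, MvPolynomial.eval₂_eq,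
    MvPolynomial.eval₂_eq, Finset.mul_sum]
  apply Finset.sum_congr rfl
  intro mo hmo
  have hdeg : ∑ i ∈ mo.support, mo i = d := by
    have := hG (MvPolynomial.mem_support_iff.mp hmo)
    rw [show (1 : Fin m → ℕ) = fun _ => 1 from rfl, ← Finsupp.degree_eq_weight_one] at this
    exact this
  simp only [mul_pow, Finset.prod_mul_distrib, Finset.prod_pow_eq_pow_sum, hdeg]
  ring

lemma diff_eq (g : Polynomial ℂ) :
    (Nfull g : ℤ) - (Ndist g : ℤ) =
      ∑ z ∈ g.roots.toFinset, ((Polynomial.rootMultiplicity z g : ℤ) - 1) := by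
  unfold Nfull Ndist
  rw [Finset.sum_sub_distrib, Finset.sum_const, nsmul_eq_mul, mul_one]
  congr 1
  rw [← Multiset.toFinset_sum_count_eq g.roots, Nat.cast_sum]
  exact Finset.sum_congr rfl fun z _ => by rw [Polynomial.count_roots]

/-- For `G` homogeneous and `f 0, …, f n` polynomials without common zeros
with `G(f) ≠ 0`, the difference between the zero count with multiplicity and the
truncated (distinct) zero count of `G(f)` is bounded by the sum over `i` of the
corresponding differences for the numerators `Gᵢ` of the rational functions
`G(f₀/fᵢ, …, fₙ/fᵢ)` in lowest terms. -/
theorem stmt3 (n : ℕ) (d : ℕ) (G : MvPolynomial (Fin (n + 1)) ℂ)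
    (hG : G.IsHomogeneous d)
    (f : Fin (n + 1) → Polynomial ℂ)
    (hcom : ∀ z : ℂ, ∃ j, (f j).eval z ≠ 0)
    (hGf : MvPolynomial.aeval f G ≠ 0) :
    (Nfull (MvPolynomial.aeval f G) : ℤ) - (Ndist (MvPolynomial.aeval f G) : ℤ) ≤
      ∑ i : Fin (n + 1),
        ((Nfull (RatFunc.num (MvPolynomial.aeval
            (fun j => algebraMap (Polynomial ℂ) (RatFunc ℂ) (f j) /
              algebraMap (Polynomial ℂ) (RatFunc ℂ) (f i)) G)) : ℤ) -
         (Ndist (RatFunc.num (MvPolynomial.aeval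
            (fun j => algebraMap (Polynomial ℂ) (RatFunc ℂ) (f j) /
              algebraMap (Polynomial ℂ) (RatFunc ℂ) (f i)) G)) : ℤ)) := by
  classical
  set alg := algebraMap (Polynomial ℂ) (RatFunc ℂ) with halg
  set g := MvPolynomial.aeval f G with hg
  set r : Fin (n + 1) → RatFunc ℂ := fun i =>
    MvPolynomial.aeval (fun j => alg (f j) / alg (f i)) G with hr
  -- r i = alg g / alg ((f i)^d)
  have hrdiv : ∀ i, r i = alg g / alg ((f i) ^ d) := by
    intro i
    have := aeval_homog_smul (S := RatFunc ℂ) hG ((alg (f i))⁻¹) (fun j => alg (f j))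
    have h2 : (fun j => (alg (f i))⁻¹ * alg (f j)) = fun j => alg (f j) / alg (f i) := by
      funext j; rw [div_eq_inv_mul]
    rw [h2] at this
    have h3 : alg g = MvPolynomial.aeval (fun j => alg (f j)) G := by
      rw [hg]
      exact MvPolynomial.comp_aeval_apply f
        (IsScalarTower.toAlgHom ℂ (Polynomial ℂ) (RatFunc ℂ)) G
    calc r i = (alg (f i))⁻¹ ^ d * alg g := by
          show (MvPolynomial.aeval fun j => alg (f j) / alg (f i)) G = _
          rw [this, h3]
      _ = alg g / alg ((f i) ^ d) := by
          rw [map_pow, div_eq_mul_inv, inv_pow]; ring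
  -- key multiplicity identity
  have key : ∀ (i : Fin (n + 1)) (z : ℂ), (f i).eval z ≠ 0 → g.eval z = 0 →
      Polynomial.rootMultiplicity z (RatFunc.num (r i)) =
        Polynomial.rootMultiplicity z g := by
    intro i z hfz hgz
    have hfi : f i ≠ 0 := fun h => hfz (by rw [h, Polynomial.eval_zero])
    have hfd : (f i) ^ d ≠ 0 := pow_ne_zero _ hfi
    have hcross : (r i).num * (f i) ^ d = g * (r i).denom :=
      (RatFunc.num_mul_eq_mul_denom_iff hfd).mpr (hrdiv i)
    have hnum : (r i).num ≠ 0 := by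
      intro h
      apply hGf
      have : g * (r i).denom = 0 := by rw [← hcross, h, zero_mul]
      rcases mul_eq_zero.mp this with h' | h'
      · exact hg ▸ h'
      · exact absurd h' (RatFunc.denom_ne_zero _)
    have hdz : (r i).denom.eval z ≠ 0 := by
      intro hdz
      obtain ⟨a, b, hab⟩ := RatFunc.isCoprime_num_denom (r i)
      have hnz : (r i).num.eval z = 0 := by
        have h1 : ((r i).num * (f i) ^ d).eval z = (g * (r i).denom).eval z := by
          rw [hcross]
        simp only [Polynomial.eval_mul, Polynomial.eval_pow, hgz, zero_mul, hdz,
          mul_zero] at h1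
        rcases mul_eq_zero.mp h1 with h' | h'
        · exact h'
        · exact absurd h' (pow_ne_zero _ hfz)
      have := congrArg (Polynomial.eval z) hab
      simp [Polynomial.eval_add, Polynomial.eval_mul, hnz, hdz] at this
    have hmul : Polynomial.rootMultiplicity z ((r i).num * (f i) ^ d) =
        Polynomial.rootMultiplicity z (g * (r i).denom) := by rw [hcross]
    rw [Polynomial.rootMultiplicity_mul (mul_ne_zero hnum hfd),
      Polynomial.rootMultiplicity_mul (mul_ne_zero (hg ▸ hGf) (RatFunc.denom_ne_zero _))]
      at hmul
    have h4 : Polynomial.rootMultiplicity z ((f i) ^ d) = 0 :=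
      Polynomial.rootMultiplicity_eq_zero
        (by simp [Polynomial.IsRoot, Polynomial.eval_pow, hfz])
    have h5 : Polynomial.rootMultiplicity z (r i).denom = 0 :=
      Polynomial.rootMultiplicity_eq_zero hdz
    rw [h4, h5, add_zero, add_zero] at hmul
    exact hmul
  -- choice of index
  have hgne : g ≠ 0 := hg ▸ hGf
  set ix : ℂ → Fin (n + 1) := fun z => (hcom z).choose with hix
  have hixs : ∀ z, (f (ix z)).eval z ≠ 0 := fun z => (hcom z).choose_spec
  rw [diff_eq g]
  have hfib : ∑ z ∈ g.roots.toFinset, ((Polynomial.rootMultiplicity z g : ℤ) - 1) =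
      ∑ i : Fin (n + 1), ∑ z ∈ g.roots.toFinset.filter (fun z => ix z = i),
        ((Polynomial.rootMultiplicity z g : ℤ) - 1) :=
    (Finset.sum_fiberwise g.roots.toFinset ix _).symm
  rw [hfib]
  apply Finset.sum_le_sum
  intro i _
  rw [diff_eq]
  set s := g.roots.toFinset.filter (fun z => ix z = i) with hs
  have hsub : s ⊆ (RatFunc.num (r i)).roots.toFinset := by
    intro z hz
    rw [hs, Finset.mem_filter] at hz
    obtain ⟨hz1, hz2⟩ := hz
    have hgz : g.eval z = 0 := by
      have := Multiset.mem_toFinset.mp hz1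
      exact (Polynomial.mem_roots hgne).mp this
    have hfz : (f i).eval z ≠ 0 := hz2 ▸ hixs z
    have hk := key i z hfz hgz
    have hmult : 0 < Polynomial.rootMultiplicity z g :=
      (Polynomial.rootMultiplicity_pos hgne).mpr hgz
    have hnum : (RatFunc.num (r i)) ≠ 0 := by
      intro h
      rw [h, Polynomial.rootMultiplicity_zero] at hk
      omega
    rw [Multiset.mem_toFinset, Polynomial.mem_roots hnum]
    exact (Polynomial.rootMultiplicity_pos hnum).mp (hk ▸ hmult)
  calc ∑ z ∈ s, ((Polynomial.rootMultiplicity z g : ℤ) - 1)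
      = ∑ z ∈ s, ((Polynomial.rootMultiplicity z (RatFunc.num (r i)) : ℤ) - 1) := by
        apply Finset.sum_congr rfl
        intro z hz
        rw [hs, Finset.mem_filter] at hz
        obtain ⟨hz1, hz2⟩ := hz
        have hgz : g.eval z = 0 :=
          (Polynomial.mem_roots hgne).mp (Multiset.mem_toFinset.mp hz1)
        rw [key i z (hz2 ▸ hixs z) hgz]
    _ ≤ ∑ z ∈ (RatFunc.num (r i)).roots.toFinset,
          ((Polynomial.rootMultiplicity z (RatFunc.num (r i)) : ℤ) - 1) := by
        apply Finset.sum_le_sum_of_subset_of_nonneg hsub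
        intro z hz _
        have hnum : RatFunc.num (r i) ≠ 0 := by
          intro h
          rw [h, Polynomial.roots_zero] at hz
          simp at hz
        have hzr : (RatFunc.num (r i)).eval z = 0 :=
          (Polynomial.mem_roots hnum).mp (Multiset.mem_toFinset.mp hz)
        have : 0 < Polynomial.rootMultiplicity z (RatFunc.num (r i)) :=
          (Polynomial.rootMultiplicity_pos hnum).mpr hzr
        omega
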